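/- Let (X, δ) be a diversity and f : P_fin(X) → ℝ. Then the following are equivalent: (a) there exist a diversity (Y, δ_Y), a map ι : X → Y with δ_Y(ι(A)) = δ(A) for all finite A ⊆ X, and a point z ∈ Y such that f(A) = δ_Y(ι(A) ∪ {z}) for all finite A ⊆ X; (b) f satisfies: (i) f(∅) = 0; (ii) f(A) ≥ δ(A) for all finite A ⊆ X; (iii) f(A ∪ C) + δ(B ∪ C) ≥ f(A ∪ B) for all finite A, B, C ⊆ X with C nonempty; (iv) f(A) + f(B) ≥ f(A ∪ B) for all finite A, B ⊆ X. -/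

import Mathlib

open scoped Classical

/-- A diversity on `X`: a real-valued function on finite subsets satisfying
(D1) nonnegativity with `δ A = 0 ↔ |A| ≤ 1`, and (D2) the triangle inequality. -/
structure Diversity (X : Type*) where
  δ : Finset X → ℝ
  nonneg : ∀ A : Finset X, 0 ≤ δ A
  eq_zero_iff : ∀ A : Finset X, δ A = 0 ↔ A.card ≤ 1
  triangle : ∀ A B C : Finset X, B.Nonempty → δ (A ∪ C) ≤ δ (A ∪ B) + δ (B ∪ C)

/-- An admissible function on a diversity (a one-point extension). -/
structure IsAdmissible {X : Type*} (D : Diversity X) (f : Finset X → ℝ) : Prop where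
  empty : f ∅ = 0
  le : ∀ A : Finset X, D.δ A ≤ f A
  tri : ∀ A B C : Finset X, C.Nonempty → f (A ∪ B) ≤ f (A ∪ C) + D.δ (B ∪ C)
  subadd : ∀ A B : Finset X, f (A ∪ B) ≤ f A + f B

/-- Restriction of a diversity to a subset. -/
noncomputable def Diversity.restrict {X : Type*} (D : Diversity X) (S : Set X) : Diversity S where
  δ A := D.δ (A.image Subtype.val)
  nonneg A := D.nonneg _
  eq_zero_iff A := by
    rw [D.eq_zero_iff, Finset.card_image_of_injective _ Subtype.val_injective]
  triangle A B C hB := by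
    have h := D.triangle (A.image Subtype.val) (B.image Subtype.val) (C.image Subtype.val)
      (hB.image _)
    simpa [Finset.image_union] using h

/-- Separability of the induced metric `d a b = δ {a, b}`. -/
def Diversity.SeparableD {X : Type*} (D : Diversity X) : Prop :=
  ∃ s : Set X, s.Countable ∧ ∀ x : X, ∀ ε : ℝ, 0 < ε → ∃ y ∈ s, D.δ {x, y} < ε

/-- Completeness of the induced metric `d a b = δ {a, b}`. -/
def Diversity.CompleteD {X : Type*} (D : Diversity X) : Prop :=
  ∀ u : ℕ → X, (∀ ε : ℝ, 0 < ε → ∃ N : ℕ, ∀ m ≥ N, ∀ n ≥ N, D.δ {u m, u n} < ε) →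
    ∃ x : X, ∀ ε : ℝ, 0 < ε → ∃ N : ℕ, ∀ n ≥ N, D.δ {u n, x} < ε

/-- The diversity `δ̂` on (finite sets of) admissible functions. -/
noncomputable def hatδ {X : Type*} (F : Finset (Finset X → ℝ)) : ℝ :=
  if F.card ≤ 1 then 0
  else sSup { r : ℝ | ∃ j ∈ F, ∃ A : (Finset X → ℝ) → Finset X,
    r = j ((F.erase j).biUnion A) - ∑ i ∈ F.erase j, i (A i) }

/-- The canonical maximal extension `f_S^X` of an admissible function on `S ⊆ X`. -/
noncomputable def extFun {X : Type*} (D : Diversity X) (S : Set X) (f : Finset S → ℝ)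
    (A : Finset X) : ℝ :=
  sInf { r : ℝ | ∃ (B : Finset S) (As : S → Finset X),
    B.biUnion As = A ∧ r = f B + ∑ b ∈ B, D.δ (insert (b : X) (As b)) }

/-- An admissible function is finitely supported if it is the canonical extension
of an admissible function on some finite nonempty `S ⊆ X`. -/
def FinitelySupported {X : Type*} (D : Diversity X) (f : Finset X → ℝ) : Prop :=
  ∃ S : Set X, S.Finite ∧ S.Nonempty ∧ ∃ g : Finset S → ℝ,
    IsAdmissible (D.restrict S) g ∧ f = extFun D S g

/-- The extension property for a diversity. -/
def Diversity.ExtensionProp {X : Type*} (D : Diversity X) : Prop :=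
  ∀ F : Finset X, ∀ f : Finset ((F : Set X)) → ℝ,
    IsAdmissible (D.restrict (F : Set X)) f →
    ∃ x : X, ∀ A : Finset ((F : Set X)), D.δ (insert x (A.image Subtype.val)) = f A

/-- The approximate extension property for a diversity. -/
def Diversity.ApproxExtensionProp {X : Type*} (D : Diversity X) : Prop :=
  ∀ F : Finset X, ∀ f : Finset ((F : Set X)) → ℝ,
    IsAdmissible (D.restrict (F : Set X)) f →
    ∀ ε : ℝ, 0 < ε →
      ∃ x : X, ∀ A : Finset ((F : Set X)), |D.δ (insert x (A.image Subtype.val)) - f A| ≤ ε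

/-- Ultrahomogeneity: isomorphisms between finite subsets extend to automorphisms. -/
def Diversity.Ultrahomogeneous {X : Type*} (D : Diversity X) : Prop :=
  ∀ (A A' : Finset X) (φ : ((A : Set X)) → ((A' : Set X))), Function.Bijective φ →
    (∀ B : Finset ((A : Set X)),
      D.δ (B.image (fun b => (φ b : X))) = D.δ (B.image Subtype.val)) →
    ∃ Φ : X → X, Function.Bijective Φ ∧ (∀ C : Finset X, D.δ (C.image Φ) = D.δ C) ∧
      ∀ a : ((A : Set X)), Φ a = (φ a : X)
lemma Diversity.delta_singleton {X : Type*} (D : Diversity X) (a : X) : D.δ {a} = 0 :=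
  (D.eq_zero_iff _).mpr (by simp)

lemma Diversity.le_insert {X : Type*} (D : Diversity X) (A : Finset X) (a : X) :
    D.δ A ≤ D.δ (insert a A) := by
  have h := D.triangle A {a} ∅ (Finset.singleton_nonempty a)
  rw [Finset.union_empty, Finset.union_empty, D.delta_singleton, add_zero, Finset.union_comm,
    ← Finset.insert_eq] at h
  exact h

lemma Diversity.mono {X : Type*} (D : Diversity X) {A B : Finset X} (h : A ⊆ B) :
    D.δ A ≤ D.δ B := by
  classical
  have key : ∀ s : Finset X, D.δ A ≤ D.δ (A ∪ s) := by
    intro s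
    induction s using Finset.induction_on with
    | empty => simp
    | @insert a s ha ih =>
      calc D.δ A ≤ D.δ (A ∪ s) := ih
        _ ≤ D.δ (insert a (A ∪ s)) := D.le_insert _ _
        _ = D.δ (A ∪ insert a s) := by rw [Finset.union_insert]
  have := key B
  rwa [Finset.union_eq_right.mpr h] at this

lemma IsAdmissible.mono {X : Type*} {D : Diversity X} {f : Finset X → ℝ}
    (hf : IsAdmissible D f) {A B : Finset X} (h : A ⊆ B) : f A ≤ f B := by
  classical
  have step : ∀ (s : Finset X) (a : X), f s ≤ f (insert a s) := by
    intro s a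
    have h := hf.tri s ∅ {a} (Finset.singleton_nonempty a)
    rw [Finset.union_empty, Finset.empty_union, D.delta_singleton, add_zero, Finset.union_comm,
      ← Finset.insert_eq] at h
    exact h
  have key : ∀ s : Finset X, f A ≤ f (A ∪ s) := by
    intro s
    induction s using Finset.induction_on with
    | empty => simp
    | @insert a s ha ih =>
      calc f A ≤ f (A ∪ s) := ih
        _ ≤ f (insert a (A ∪ s)) := step _ _
        _ = f (A ∪ insert a s) := by rw [Finset.union_insert]
  have := key B
  rwa [Finset.union_eq_right.mpr h] at this

lemma IsAdmissible.tri2 {X : Type*} {D : Diversity X} {f : Finset X → ℝ}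
    (hf : IsAdmissible D f) (a b c : Finset X) : f (a ∪ c) ≤ f (a ∪ b) + f (b ∪ c) := by
  classical
  calc f (a ∪ c) ≤ f ((a ∪ b) ∪ (b ∪ c)) := by
        apply hf.mono
        intro x hx
        rcases Finset.mem_union.mp hx with h | h
        · exact Finset.mem_union_left _ (Finset.mem_union_left _ h)
        · exact Finset.mem_union_right _ (Finset.mem_union_right _ h)
    _ ≤ f (a ∪ b) + f (b ∪ c) := hf.subadd _ _

/-- `f` is realized as a one-point extension of `(X, δ)` iff `f` is admissible. -/
theorem stmt1 {X : Type u} (D : Diversity X) (f : Finset X → ℝ) :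
    (∃ (Y : Type u) (DY : Diversity Y) (ι : X → Y) (z : Y),
      (∀ A : Finset X, DY.δ (A.image ι) = D.δ A) ∧
      (∀ A : Finset X, f A = DY.δ (insert z (A.image ι)))) ↔
    IsAdmissible D f := by
  classical
  constructor
  · rintro ⟨Y, DY, ι, z, hι, hfz⟩
    constructor
    · rw [hfz]
      simpa using (DY.eq_zero_iff {z}).mpr (by simp)
    · intro A
      rw [hfz, ← hι]
      exact DY.mono (Finset.subset_insert _ _)
    · intro A B C hC
      rw [hfz, hfz, ← hι (B ∪ C)]
      have h := DY.triangle (insert z (A.image ι)) (C.image ι) (B.image ι)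
        (hC.image ι)
      calc DY.δ (insert z ((A ∪ B).image ι))
          = DY.δ (insert z (A.image ι) ∪ B.image ι) := by
            rw [Finset.image_union, Finset.insert_union]
        _ ≤ DY.δ (insert z (A.image ι) ∪ C.image ι)
            + DY.δ (C.image ι ∪ B.image ι) := h
        _ = DY.δ (insert z ((A ∪ C).image ι)) + DY.δ ((B ∪ C).image ι) := by
            rw [Finset.image_union, Finset.insert_union, Finset.image_union,
              Finset.union_comm (C.image ι)]
    · intro A B
      rw [hfz, hfz, hfz]
      have h := DY.triangle (insert z (A.image ι)) {z} (insert z (B.image ι))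
        (Finset.singleton_nonempty z)
      calc DY.δ (insert z ((A ∪ B).image ι))
          = DY.δ (insert z (A.image ι) ∪ insert z (B.image ι)) := by
            rw [Finset.image_union, Finset.insert_union, Finset.union_insert,
              Finset.insert_idem]
        _ ≤ DY.δ (insert z (A.image ι) ∪ {z}) + DY.δ ({z} ∪ insert z (B.image ι)) := h
        _ = DY.δ (insert z (A.image ι)) + DY.δ (insert z (B.image ι)) := by
            rw [Finset.union_comm _ ({z} : Finset Y), ← Finset.insert_eq,
              Finset.insert_idem, ← Finset.insert_eq, Finset.insert_idem]
  · intro hf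
    by_cases hdeg : ∃ x : X, f {x} = 0
    · obtain ⟨x, hx⟩ := hdeg
      refine ⟨X, D, id, x, by simp, ?_⟩
      intro A
      have h1 : f A ≤ D.δ (insert x A) := by
        have h := hf.tri ∅ A {x} (Finset.singleton_nonempty x)
        simp only [Finset.empty_union] at h
        calc f A ≤ f {x} + D.δ (A ∪ {x}) := h
          _ = D.δ (insert x A) := by
              rw [hx, zero_add, Finset.union_comm, ← Finset.insert_eq]
      have h2 : D.δ (insert x A) ≤ f A := by
        calc D.δ (insert x A) ≤ f (insert x A) := hf.le _
          _ = f (A ∪ {x}) := by rw [Finset.union_comm, ← Finset.insert_eq]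
          _ ≤ f A + f {x} := hf.subadd _ _
          _ = f A := by rw [hx, add_zero]
      simpa using le_antisymm h1 h2
    · push_neg at hdeg
      have fpos : ∀ x : X, 0 < f {x} := fun x =>
        lt_of_le_of_ne (le_trans (D.nonneg _) (hf.le _)) (Ne.symm (hdeg x))
      set g : Finset (Option X) → ℝ :=
        fun F => if none ∈ F then f F.eraseNone else D.δ F.eraseNone with hg
      have gle : ∀ F : Finset (Option X), g F ≤ f F.eraseNone := by
        intro F
        by_cases h : none ∈ F <;> simp [hg, h, hf.le]
      have fepos : ∀ e : Finset X, e.Nonempty → 0 < f e := by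
        intro e he
        by_cases hc : e.card ≤ 1
        · obtain ⟨y, hy⟩ := Finset.card_eq_one.mp
            (le_antisymm hc (Finset.one_le_card.mpr he))
          rw [hy]; exact fpos y
        · have hδ : 0 < D.δ e :=
            lt_of_le_of_ne (D.nonneg e) (Ne.symm (fun h0 => hc ((D.eq_zero_iff e).mp h0)))
          exact lt_of_lt_of_le hδ (hf.le e)
      refine ⟨Option X, ⟨g, ?_, ?_, ?_⟩, some, none, ?_, ?_⟩
      · intro F
        by_cases h : none ∈ F <;>
          simp [hg, h, le_trans (D.nonneg _) (hf.le _), D.nonneg]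
      · intro F
        by_cases h : none ∈ F
        · have hcard : F.card = F.eraseNone.card + 1 := by
            have hF : F = Finset.insertNone F.eraseNone := by
              rw [Finset.insertNone_eraseNone, Finset.insert_eq_self.mpr h]
            conv_lhs => rw [hF]
            rw [Finset.card_insertNone]
          simp only [hg, if_pos h]
          constructor
          · intro h0
            by_contra hc
            rw [hcard] at hc
            have hne : F.eraseNone.Nonempty :=
              Finset.nonempty_of_ne_empty (fun he => by simp [he] at hc)
            exact absurd h0 (ne_of_gt (fepos _ hne))
          · intro hc
            rw [hcard] at hc
            have : F.eraseNone = ∅ := Finset.card_eq_zero.mp (by omega)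
            rw [this]; exact hf.empty
        · have hcard : F.eraseNone.card = F.card := by
            have hF : F = F.eraseNone.image some := by
              rw [Finset.image_some_eraseNone, Finset.erase_eq_self.mpr h]
            conv_rhs => rw [hF]
            rw [Finset.card_image_of_injective _ (Option.some_injective X)]
          simp only [hg, if_neg h, D.eq_zero_iff, hcard]
      · intro A B C hB
        have hbnon : none ∉ B → B.eraseNone.Nonempty := by
          intro hnb
          obtain ⟨y, hy⟩ := hB
          cases y with
          | none => exact absurd hy hnb
          | some x => exact ⟨x, Finset.mem_eraseNone.mpr hy⟩
        simp only [hg, Finset.eraseNone_union]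
        by_cases hb : none ∈ B
        · simp only [Finset.mem_union, hb, or_true, true_or, if_true]
          refine le_trans ?_ (hf.tri2 A.eraseNone B.eraseNone C.eraseNone)
          split_ifs with h
          · exact le_rfl
          · exact hf.le _
        · have hbne := hbnon hb
          by_cases ha : none ∈ A <;> by_cases hc : none ∈ C <;>
            simp only [Finset.mem_union, ha, hb, hc, or_self,
              true_or, or_true, false_or, or_false, if_true, if_false]
          · exact hf.tri2 _ _ _
          · have h := hf.tri A.eraseNone C.eraseNone B.eraseNone hbne
            rwa [Finset.union_comm C.eraseNone] at h
          · rw [Finset.union_comm A.eraseNone C.eraseNone,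
              Finset.union_comm B.eraseNone C.eraseNone, add_comm]
            exact hf.tri C.eraseNone A.eraseNone B.eraseNone hbne
          · exact D.triangle _ _ _ hbne
      · intro A
        have hnone : none ∉ A.image some := by simp
        simp [hg, hnone, Finset.eraseNone_image_some]
      · intro A
        simp only [hg, Finset.mem_insert_self, if_true]
        congr 1
        ext x
        simp [Finset.mem_eraseNone]
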